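/- Let M be a nonempty, path-connected, locally compact, second-countable Hausdorff topological space (for instance a connected topological manifold). Let Ran(M) be the set of nonempty finite subsets of M, equipped with the final topology with respect to the family of maps qₖ : (Fin k → M) → Ran(M) for k ≥ 1 (source carrying the product topology) sending a tuple to its image. For S ∈ Ran(M) a nonempty finite subset of M, let Ran(M)_S ⊆ Ran(M) be the subspace of those finite subsets T with S ⊆ T. Then Ran(M)_S is weakly contractible: it is path-connected, and for every n ≥ 1 the homotopy group πₙ(Ran(M)_S, S) is trivial (a subsingleton). -/

import Mathlib

/-!  STATEMENT 5: For a nonempty, path-connected, locally compact, second-countable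
Hausdorff space `M`, the Ran space `Ran(M)` of nonempty finite subsets of `M` (with the
final topology induced by the tuple-to-image maps `(Fin k → M) → Ran(M)`, `k ≥ 1`), and
for each `S ∈ Ran(M)` the subspace `Ran(M)_S` of finite subsets containing `S`, is
weakly contractible: path-connected with trivial homotopy groups. -/

/-- The underlying set of the Ran space: nonempty finite subsets of `M`. -/
def RanSpace (M : Type*) : Type _ := {S : Set M // S.Finite ∧ S.Nonempty}

/-- The tuple-to-image map `(Fin (k+1) → M) → Ran(M)`. -/
def ranQ (M : Type*) (k : ℕ) (f : Fin (k + 1) → M) : RanSpace M :=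
  ⟨Set.range f, Set.finite_range f, Set.range_nonempty f⟩

/-- The Ran space carries the final topology with respect to the maps `ranQ M k`,
whose sources carry the product topology. -/
instance (M : Type*) [TopologicalSpace M] : TopologicalSpace (RanSpace M) :=
  ⨆ k : ℕ, TopologicalSpace.coinduced (ranQ M k) inferInstance

/-- The subspace `Ran(M)_S` of finite subsets containing `S`. -/
def RanSpaceAt (M : Type*) (S : RanSpace M) : Set (RanSpace M) :=
  {T : RanSpace M | S.1 ⊆ T.1}

namespace RanAux

/-- Union of two points of the Ran space. -/
def rUnion {M : Type*} (T U : RanSpace M) : RanSpace M :=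
  ⟨T.1 ∪ U.1, (T.2.1.union U.2.1), T.2.2.inl⟩

theorem range_fin_append {α : Type*} {m n : ℕ} (u : Fin m → α) (v : Fin n → α) :
    Set.range (Fin.append u v) = Set.range u ∪ Set.range v := by
  apply Set.Subset.antisymm
  · rintro x ⟨i, rfl⟩
    refine Fin.addCases (fun i => ?_) (fun i => ?_) i
    · rw [Fin.append_left]; exact Or.inl ⟨i, rfl⟩
    · rw [Fin.append_right]; exact Or.inr ⟨i, rfl⟩
  · rintro x (⟨i, rfl⟩ | ⟨i, rfl⟩)
    · exact ⟨Fin.castAdd n i, Fin.append_left u v i⟩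
    · exact ⟨Fin.natAdd m i, Fin.append_right u v i⟩

theorem continuous_append_prod {α : Type*} [TopologicalSpace α] {m n : ℕ} :
    Continuous fun p : (Fin m → α) × (Fin n → α) => Fin.append p.1 p.2 := by
  refine continuous_pi fun i => ?_
  refine Fin.addCases (motive := fun i =>
    Continuous fun p : (Fin m → α) × (Fin n → α) => Fin.append p.1 p.2 i)
    (fun i => ?_) (fun i => ?_) i
  · simp only [Fin.append_left]; exact (continuous_apply i).comp continuous_fst
  · simp only [Fin.append_right]; exact (continuous_apply i).comp continuous_snd

/-- `Fin.append` reindexed to match `ranQ` arities. -/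
def app {α : Type*} {j k : ℕ} (f : Fin (j + 1) → α) (g : Fin (k + 1) → α) :
    Fin (j + 1 + k + 1) → α :=
  Fin.append f g ∘ finCongr (by omega)

theorem range_app {α : Type*} {j k : ℕ} (f : Fin (j + 1) → α) (g : Fin (k + 1) → α) :
    Set.range (app f g) = Set.range f ∪ Set.range g := by
  unfold app
  rw [Set.range_comp, Equiv.range_eq_univ, Set.image_univ, range_fin_append]

theorem continuous_app_prod {α : Type*} [TopologicalSpace α] {j k : ℕ} :
    Continuous fun p : (Fin (j + 1) → α) × (Fin (k + 1) → α) => app p.1 p.2 :=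
  continuous_pi fun i =>
    (continuous_apply ((finCongr (by omega : j + 1 + k + 1 = (j + 1) + (k + 1))) i)).comp
      continuous_append_prod

variable {M : Type*} [TopologicalSpace M]

theorem continuous_ranQ (k : ℕ) : Continuous (ranQ M k) :=
  continuous_iSup_rng (i := k) continuous_coinduced_rng

theorem ranQ_app {j k : ℕ} (f : Fin (j + 1) → M) (g : Fin (k + 1) → M) :
    ranQ M (j + 1 + k) (app f g) = rUnion (ranQ M j f) (ranQ M k g) :=
  Subtype.ext (range_app f g)

theorem exists_ranQ (T : RanSpace M) : ∃ (m : ℕ) (f : Fin (m + 1) → M), ranQ M m f = T := by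
  obtain ⟨n, f, -, hf⟩ := T.2.1.fin_param
  cases n with
  | zero =>
      exfalso
      have h := T.2.2
      rw [← hf] at h
      simp at h
  | succ m => exact ⟨m, f, Subtype.ext hf⟩

theorem continuous_ranDom {Y : Type*} [TopologicalSpace Y] {F : RanSpace M → Y}
    (h : ∀ k, Continuous fun f : Fin (k + 1) → M => F (ranQ M k f)) : Continuous F :=
  continuous_iSup_dom.mpr fun k => continuous_coinduced_dom.mpr (h k)

theorem continuous_rUnion_ranQ_right (T : RanSpace M) (k : ℕ) :
    Continuous fun g : Fin (k + 1) → M => rUnion T (ranQ M k g) := by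
  obtain ⟨m, f, rfl⟩ := exists_ranQ T
  exact (((continuous_ranQ (M := M) (m + 1 + k)).comp continuous_app_prod).comp
    (continuous_const.prodMk continuous_id)).congr fun g => ranQ_app f g

theorem continuous_ranQ_rUnion_left (T : RanSpace M) (j : ℕ) :
    Continuous fun f : Fin (j + 1) → M => rUnion (ranQ M j f) T := by
  obtain ⟨m, g, rfl⟩ := exists_ranQ T
  exact (((continuous_ranQ (M := M) (j + 1 + m)).comp continuous_app_prod).comp
    (continuous_id.prodMk continuous_const)).congr fun f => ranQ_app f g

theorem continuous_rUnion_left (T : RanSpace M) :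
    Continuous fun U : RanSpace M => rUnion T U :=
  continuous_ranDom fun k => continuous_rUnion_ranQ_right T k

variable [LocallyCompactSpace M]

theorem continuous_rUnion_ranQ_uncurried (j : ℕ) :
    Continuous fun p : RanSpace M × (Fin (j + 1) → M) => rUnion (ranQ M j p.2) p.1 := by
  have key : Continuous fun T : RanSpace M =>
      (⟨fun f => rUnion (ranQ M j f) T, continuous_ranQ_rUnion_left T j⟩ :
        C(Fin (j + 1) → M, RanSpace M)) := by
    refine continuous_ranDom fun k => ?_
    apply ContinuousMap.continuous_of_continuous_uncurry
    have h : Continuous fun p : (Fin (k + 1) → M) × (Fin (j + 1) → M) =>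
        rUnion (ranQ M j p.2) (ranQ M k p.1) :=
      (((continuous_ranQ (M := M) (j + 1 + k)).comp continuous_app_prod).comp
        (continuous_snd.prodMk continuous_fst)).congr fun p => ranQ_app p.2 p.1
    exact h
  have h := ContinuousMap.continuous_uncurry_of_continuous
    (⟨_, key⟩ : C(RanSpace M, C(Fin (j + 1) → M, RanSpace M)))
  exact h

theorem continuous_rUnion_comp {Z : Type*} [TopologicalSpace Z] [LocallyCompactSpace Z]
    {B : Z → RanSpace M} (hB : Continuous B) :
    Continuous fun p : RanSpace M × Z => rUnion p.1 (B p.2) := by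
  have key : Continuous fun T : RanSpace M =>
      (⟨fun z => rUnion T (B z), (continuous_rUnion_left T).comp hB⟩ : C(Z, RanSpace M)) := by
    refine continuous_ranDom fun j => ?_
    apply ContinuousMap.continuous_of_continuous_uncurry
    have h : Continuous fun p : (Fin (j + 1) → M) × Z => rUnion (ranQ M j p.1) (B p.2) :=
      (continuous_rUnion_ranQ_uncurried j).comp
        ((hB.comp continuous_snd).prodMk continuous_fst)
    exact h
  have h := ContinuousMap.continuous_uncurry_of_continuous
    (⟨_, key⟩ : C(RanSpace M, C(Z, RanSpace M)))
  exact h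

theorem continuous_rUnion₂ {Z : Type*} [TopologicalSpace Z] [LocallyCompactSpace Z]
    {A B : Z → RanSpace M} (hA : Continuous A) (hB : Continuous B) :
    Continuous fun z => rUnion (A z) (B z) :=
  (continuous_rUnion_comp hB).comp (hA.prodMk continuous_id)

end RanAux

section Sub

variable {M : Type*} [TopologicalSpace M] {S : RanSpace M}

/-- Union of two points of `Ran(M)_S`. -/
def xU (a b : RanSpaceAt M S) : RanSpaceAt M S :=
  ⟨RanAux.rUnion a.1 b.1, Set.Subset.trans a.2 Set.subset_union_left⟩

theorem xU_self (a : RanSpaceAt M S) : xU a a = a :=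
  Subtype.ext (Subtype.ext (Set.union_self _))

theorem xU_base_left (a : RanSpaceAt M S) : xU ⟨S, fun _ h => h⟩ a = a :=
  Subtype.ext (Subtype.ext (Set.union_eq_self_of_subset_left a.2))

theorem xU_base_right (a : RanSpaceAt M S) : xU a ⟨S, fun _ h => h⟩ = a :=
  Subtype.ext (Subtype.ext (Set.union_eq_self_of_subset_right a.2))

theorem continuous_xU₂ [LocallyCompactSpace M] {Z : Type*} [TopologicalSpace Z]
    [LocallyCompactSpace Z] {A B : Z → RanSpaceAt M S}
    (hA : Continuous A) (hB : Continuous B) :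
    Continuous fun z => xU (A z) (B z) :=
  (RanAux.continuous_rUnion₂ (continuous_subtype_val.comp hA)
    (continuous_subtype_val.comp hB)).subtype_mk _

end Sub

open scoped unitInterval Topology Topology.Homotopy

open GenLoop

theorem ranSpaceAt_weakly_contractible (M : Type*) [TopologicalSpace M] [Nonempty M]
    [PathConnectedSpace M] [LocallyCompactSpace M] [SecondCountableTopology M]
    [T2Space M] (S : RanSpace M) :
    PathConnectedSpace ↥(RanSpaceAt M S) ∧
    ∀ n : ℕ, 1 ≤ n →
      Subsingleton (HomotopyGroup (Fin n) ↥(RanSpaceAt M S) ⟨S, fun _ h => h⟩) := by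
  set x₀ : RanSpaceAt M S := ⟨S, fun _ h => h⟩ with hx₀
  -- Path-connectedness
  have joined_base : ∀ a : ↥(RanSpaceAt M S), Joined a x₀ := by
    intro a
    obtain ⟨m, f, hf⟩ := RanAux.exists_ranQ a.1
    obtain ⟨l, g, hg⟩ := RanAux.exists_ranQ S
    obtain ⟨s₀, hs₀⟩ := S.2.2
    have hgr : Set.range g = S.1 := congrArg Subtype.val hg
    have hfr : Set.range f = a.1.1 := congrArg Subtype.val hf
    have p : ∀ i : Fin (m + 1), Path (f i) s₀ :=
      fun i => (PathConnectedSpace.joined (f i) s₀).somePath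
    have mem : ∀ t : I,
        ranQ M (m + 1 + l) (RanAux.app (fun i => p i t) g) ∈ RanSpaceAt M S := by
      intro t x hx
      show x ∈ Set.range (RanAux.app (fun i => p i t) g)
      rw [RanAux.range_app]
      exact Or.inr (hgr ▸ hx)
    refine ⟨⟨⟨fun t => ⟨ranQ M (m + 1 + l) (RanAux.app (fun i => p i t) g), mem t⟩, ?_⟩,
      ?_, ?_⟩⟩
    · refine Continuous.subtype_mk ((RanAux.continuous_ranQ (M := M) _).comp ?_) _
      exact RanAux.continuous_app_prod.comp
        ((continuous_pi fun i => (p i).continuous).prodMk continuous_const)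
    · refine Subtype.ext (Subtype.ext ?_)
      show Set.range (RanAux.app (fun i => p i 0) g) = a.1.1
      have hp0 : (fun i => p i 0) = f := funext fun i => (p i).source
      rw [RanAux.range_app, hp0, hfr, hgr, Set.union_eq_self_of_subset_right a.2]
    · refine Subtype.ext (Subtype.ext ?_)
      show Set.range (RanAux.app (fun i => p i 1) g) = S.1
      have hp1 : (fun i => p i 1) = fun _ => s₀ := funext fun i => (p i).target
      rw [RanAux.range_app, hp1, hgr, Set.range_const,
        Set.union_eq_self_of_subset_left (Set.singleton_subset_iff.mpr hs₀)]
  constructor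
  · exact ⟨⟨x₀⟩, fun x y => (joined_base x).trans (joined_base y).symm⟩
  · intro n hn
    haveI : Nonempty (Fin n) := ⟨⟨0, hn⟩⟩
    set i0 : Fin n := ⟨0, hn⟩
    have key : ∀ γ : Ω^ (Fin n) ↥(RanSpaceAt M S) x₀,
        ⟦γ⟧ = (1 : HomotopyGroup (Fin n) ↥(RanSpaceAt M S) x₀) := by
      intro γ
      -- homotopies γ·c ≃ γ and c·γ ≃ γ
      have ee1 : ((· * ·) : _ → _ → HomotopyGroup (Fin n) ↥(RanSpaceAt M S) x₀) 1 ⟦γ⟧ = ⟦γ⟧ :=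
        one_mul _
      rw [HomotopyGroup.one_def] at ee1
      have e1 : (⟦transAt i0 γ const⟧ : HomotopyGroup (Fin n) ↥(RanSpaceAt M S) x₀) = ⟦γ⟧ :=
        (HomotopyGroup.mul_spec (i := i0) (p := const) (q := γ)).symm.trans ee1
      have ee2 : ((· * ·) : _ → _ → HomotopyGroup (Fin n) ↥(RanSpaceAt M S) x₀) ⟦γ⟧ 1 = ⟦γ⟧ :=
        mul_one _
      rw [HomotopyGroup.one_def] at ee2
      have e2 : (⟦transAt i0 const γ⟧ : HomotopyGroup (Fin n) ↥(RanSpaceAt M S) x₀) = ⟦γ⟧ :=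
        (HomotopyGroup.mul_spec (i := i0) (p := γ) (q := const)).symm.trans ee2
      have h1 : GenLoop.Homotopic (transAt i0 γ const) γ := Quotient.exact e1
      have h2 : GenLoop.Homotopic (transAt i0 const γ) γ := Quotient.exact e2
      obtain ⟨H₁⟩ := h1
      obtain ⟨H₂⟩ := h2
      -- pointwise identity: transAt i0 γ γ = (γ·c) ∪ (c·γ)
      have ptwise : ∀ y, transAt i0 γ γ y
          = xU (transAt i0 γ const y) (transAt i0 const γ y) := by
        intro y
        simp only [transAt, coe_copy]
        split_ifs with h
        · exact (xU_base_right _).symm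
        · exact (xU_base_left _).symm
      -- the idempotence homotopy
      have hom : GenLoop.Homotopic (transAt i0 γ γ) γ := by
        refine ⟨⟨⟨⟨fun q => xU (H₁ q) (H₂ q),
          continuous_xU₂ H₁.continuous H₂.continuous⟩, ?_, ?_⟩, ?_⟩⟩
        · intro y
          show xU (H₁ (0, y)) (H₂ (0, y)) = _
          rw [H₁.apply_zero, H₂.apply_zero]
          exact (ptwise y).symm
        · intro y
          show xU (H₁ (1, y)) (H₂ (1, y)) = _
          rw [H₁.apply_one, H₂.apply_one]
          exact xU_self _
        · intro t y hy
          show xU (H₁ (t, y)) (H₂ (t, y)) = _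
          have b1 : H₁ (t, y) = x₀ :=
            (H₁.eq_fst t hy).trans ((transAt i0 γ const).2 y hy)
          have b2 : H₂ (t, y) = x₀ :=
            (H₂.eq_fst t hy).trans ((transAt i0 const γ).2 y hy)
          rw [b1, b2]
          exact (xU_self x₀).trans ((transAt i0 γ γ).2 y hy).symm
      have hγγ : (⟦transAt i0 γ γ⟧ : HomotopyGroup (Fin n) ↥(RanSpaceAt M S) x₀) = ⟦γ⟧ :=
        Quotient.sound hom
      have hmul : ((· * ·) : _ → _ → HomotopyGroup (Fin n) ↥(RanSpaceAt M S) x₀) ⟦γ⟧ ⟦γ⟧ = ⟦γ⟧ :=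
        (HomotopyGroup.mul_spec (i := i0) (p := γ) (q := γ)).trans hγγ
      exact mul_eq_left.mp hmul
    exact ⟨fun a b => Quotient.inductionOn₂ a b fun γ δ => (key γ).trans (key δ).symm⟩
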